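/- For all well orders X and Y on subsets of ℕ∖{0}, there exists exactly one function f : ℕ → ℕ such that either f is a strong comparison map from X to Y, or f is a strong comparison map from Y+1 to X. -/

import Mathlib

/-- `r` is a strict linear order on the set `X`. -/
def IsLinOrdOn {α : Type*} (X : Set α) (r : α → α → Prop) : Prop :=
  (∀ a ∈ X, ∀ b ∈ X, ∀ c ∈ X, r a b → r b c → r a c) ∧
  (∀ a ∈ X, ¬r a a) ∧
  (∀ a ∈ X, ∀ b ∈ X, r a b ∨ a = b ∨ r b a)

/-- `r` is a well order on the set `X`: a strict linear order on `X` that is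
well-founded on `X`. -/
def IsWellOrdOn {α : Type*} (X : Set α) (r : α → α → Prop) : Prop :=
  IsLinOrdOn X r ∧ WellFounded (Subrel r X)

/-- `f : ℕ → ℕ` is a strong comparison map from `(X, rX)` to `(Y, rY)`
(`f : X ≤_s Y`): `f` vanishes off `X`, maps `X` into `Y` as an order embedding
(w.r.t. the reflexive closures of the strict orders), and its image is an initial
segment of `Y`. -/
def StrongCompMap (X : Set ℕ) (rX : ℕ → ℕ → Prop) (Y : Set ℕ) (rY : ℕ → ℕ → Prop)
    (f : ℕ → ℕ) : Prop :=
  (∀ n, n ∉ X → f n = 0) ∧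
  (∀ n ∈ X, f n ∈ Y) ∧
  (∀ n ∈ X, ∀ m ∈ X, ((rX n m ∨ n = m) ↔ (rY (f n) (f m) ∨ f n = f m))) ∧
  (∀ n ∈ X, ∀ k ∈ Y, (rY k (f n) ∨ k = f n) → ∃ m ∈ X, f m = k)

/-- The order `Y+1`: `0` (not a member of `Y`) is added to `Y` as a new greatest
element. -/
def succRel (Y : Set ℕ) (rY : ℕ → ℕ → Prop) : ℕ → ℕ → Prop :=
  fun a b => (a ∈ Y ∧ b ∈ Y ∧ rY a b) ∨ (a ∈ Y ∧ b = 0)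

section Aux

attribute [local instance] Classical.propDecidable

variable {A B : Set ℕ} {rA rB : ℕ → ℕ → Prop}

private lemma isWellOrder_of_isWellOrdOn (h : IsWellOrdOn A rA) :
    IsWellOrder (Subtype A) (Subrel rA A) := by
  obtain ⟨⟨ht, hi, htr⟩, hwf⟩ := h
  haveI : IsTrichotomous (Subtype A) (Subrel rA A) :=
    ⟨fun a b hab hba => by
      rcases htr a.1 a.2 b.1 b.2 with h | h | h
      · exact absurd h hab
      · exact Subtype.ext h
      · exact absurd h hba⟩
  haveI : IsTrans (Subtype A) (Subrel rA A) :=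
    ⟨fun a b c hab hbc => ht a.1 a.2 b.1 b.2 c.1 c.2 hab hbc⟩
  haveI : IsWellFounded (Subtype A) (Subrel rA A) := ⟨hwf⟩
  exact ⟨⟩

private lemma strongCompMap_of_initialSeg (e : InitialSeg (Subrel rA A) (Subrel rB B)) :
    StrongCompMap A rA B rB (fun n => if h : n ∈ A then (e ⟨n, h⟩).1 else 0) := by
  have emr : ∀ a b : ↥A, rB (e a).1 (e b).1 ↔ rA a.1 b.1 := fun a b =>
    e.map_rel_iff (a := a) (b := b)
  refine ⟨fun n hn => by simp [hn], fun n hn => by simp only [dif_pos hn]; exact (e ⟨n, hn⟩).2,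
    ?_, ?_⟩
  · intro n hn m hm
    simp only [dif_pos hn, dif_pos hm]
    constructor
    · rintro (h | rfl)
      · exact Or.inl ((emr ⟨n, hn⟩ ⟨m, hm⟩).2 h)
      · exact Or.inr rfl
    · rintro (h | h)
      · exact Or.inl ((emr ⟨n, hn⟩ ⟨m, hm⟩).1 h)
      · have h' : (⟨n, hn⟩ : A) = ⟨m, hm⟩ := e.injective (Subtype.ext h)
        exact Or.inr (congrArg Subtype.val h')
  · intro n hn k hk hrel
    simp only [dif_pos hn] at hrel
    rcases hrel with h | h
    · have h' : Subrel rB B ⟨k, hk⟩ (e ⟨n, hn⟩) := h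
      obtain ⟨⟨a, ha2⟩, ha⟩ := e.mem_range_of_rel h'
      refine ⟨a, ha2, ?_⟩
      simp only [dif_pos (show a ∈ A from ha2)]
      exact congrArg Subtype.val ha
    · exact ⟨n, hn, by simp only [dif_pos hn]; exact h.symm⟩

private lemma exists_initialSeg_of_strongCompMap {f : ℕ → ℕ}
    (hf : StrongCompMap A rA B rB f)
    (htA : ∀ a ∈ A, ∀ b ∈ A, ∀ c ∈ A, rA a b → rA b c → rA a c)
    (hiA : ∀ a ∈ A, ¬rA a a) (hiB : ∀ b ∈ B, ¬rB b b) :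
    ∃ e : InitialSeg (Subrel rA A) (Subrel rB B), ∀ a : A, (e a).1 = f a.1 := by
  obtain ⟨h0, hmem, hiff, hinit⟩ := hf
  have hinj : ∀ a : A, ∀ b : A, f a.1 = f b.1 → a = b := by
    intro a b hab
    by_contra hne
    have hne' : a.1 ≠ b.1 := fun h => hne (Subtype.ext h)
    rcases (hiff a.1 a.2 b.1 b.2).2 (Or.inr hab) with h1 | h1
    · rcases (hiff b.1 b.2 a.1 a.2).2 (Or.inr hab.symm) with h2 | h2
      · exact hiA a.1 a.2 (htA a.1 a.2 b.1 b.2 a.1 a.2 h1 h2)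
      · exact hne' h2.symm
    · exact hne' h1
  have hstrict : ∀ a : A, ∀ b : A, rA a.1 b.1 ↔ rB (f a.1) (f b.1) := by
    intro a b
    constructor
    · intro h
      rcases (hiff a.1 a.2 b.1 b.2).1 (Or.inl h) with h' | h'
      · exact h'
      · obtain rfl := hinj a b h'
        exact absurd h (hiA a.1 a.2)
    · intro h
      rcases (hiff a.1 a.2 b.1 b.2).2 (Or.inl h) with h' | h'
      · exact h'
      · rw [h'] at h
        exact absurd h (hiB (f b.1) (hmem b.1 b.2))
  refine ⟨⟨⟨⟨fun a => ⟨f a.1, hmem a.1 a.2⟩,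
      fun a b hab => by exact hinj a b (congrArg Subtype.val hab)⟩,
      fun {a b} => (hstrict a b).symm⟩, ?_⟩, fun a => rfl⟩
  intro a b hb
  obtain ⟨m, hm, hfm⟩ := hinit a.1 a.2 b.1 b.2 (Or.inl hb)
  exact ⟨⟨m, hm⟩, Subtype.ext hfm⟩

private lemma succRel_trans {Y : Set ℕ} {rY : ℕ → ℕ → Prop} (hY0 : 0 ∉ Y)
    (hY : IsLinOrdOn Y rY) :
    ∀ a ∈ insert 0 Y, ∀ b ∈ insert 0 Y, ∀ c ∈ insert 0 Y,
      succRel Y rY a b → succRel Y rY b c → succRel Y rY a c := by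
  rintro a - b - c - (⟨ha, hb, hab⟩ | ⟨ha, rfl⟩) h2
  · rcases h2 with ⟨hb', hc, hbc⟩ | ⟨hb', rfl⟩
    · exact Or.inl ⟨ha, hc, hY.1 a ha b hb c hc hab hbc⟩
    · exact Or.inr ⟨ha, rfl⟩
  · rcases h2 with ⟨hb', _⟩ | ⟨hb', _⟩ <;> exact absurd hb' hY0

private lemma succRel_irrefl {Y : Set ℕ} {rY : ℕ → ℕ → Prop} (hY0 : 0 ∉ Y)
    (hY : IsLinOrdOn Y rY) :
    ∀ a ∈ insert 0 Y, ¬succRel Y rY a a := by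
  rintro a - (⟨ha, _, haa⟩ | ⟨ha, rfl⟩)
  · exact hY.2.1 a ha haa
  · exact hY0 ha

private lemma exists_initialSeg_insert {Y : Set ℕ} {rY : ℕ → ℕ → Prop} (hY0 : 0 ∉ Y) :
    ∃ j : InitialSeg (Subrel rY Y) (Subrel (succRel Y rY) (insert 0 Y : Set ℕ)),
      ∀ y : Y, (j y).1 = y.1 := by
  refine ⟨⟨⟨⟨fun y => ⟨y.1, Set.mem_insert_of_mem _ y.2⟩,
      fun a b hab => by
        have h2 := congrArg Subtype.val hab
        exact Subtype.ext h2⟩, ?_⟩, ?_⟩, fun y => rfl⟩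
  · intro a b
    constructor
    · rintro (⟨_, _, h⟩ | ⟨_, h0⟩)
      · exact h
      · exact absurd (h0 ▸ b.2 : (0 : ℕ) ∈ Y) hY0
    · intro h
      exact Or.inl ⟨a.2, b.2, h⟩
  · rintro a b (⟨hb, _, hba⟩ | ⟨hb, h0⟩)
    · exact ⟨⟨b.1, hb⟩, rfl⟩
    · exact absurd (h0 ▸ a.2 : (0 : ℕ) ∈ Y) hY0

private lemma strongCompMap_succ_of_principalSeg {Y X : Set ℕ} {rY rX : ℕ → ℕ → Prop}
    (hY0 : 0 ∉ Y) (hX : IsWellOrdOn X rX)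
    (p : PrincipalSeg (Subrel rY Y) (Subrel rX X)) :
    ∃ f, StrongCompMap (insert 0 Y) (succRel Y rY) X rX f := by
  have htX := hX.1.1
  have hiX := hX.1.2.1
  have hlt : ∀ y : Y, rX (p y).1 p.top.1 := fun y => p.lt_top y
  have hinj : ∀ y y' : Y, p y = p y' → y = y' := fun y y' h => p.injective h
  have pmr : ∀ a b : ↥Y, rX (p a).1 (p b).1 ↔ rY a.1 b.1 := fun a b =>
    p.map_rel_iff (a := a) (b := b)
  set F : ↥(insert 0 Y) → ↥X := fun a => if h : a.1 ∈ Y then p ⟨a.1, h⟩ else p.top with hF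
  have hFY : ∀ (a : ↥(insert 0 Y)) (h : a.1 ∈ Y), F a = p ⟨a.1, h⟩ := fun a h => dif_pos h
  have hFtop : ∀ a : ↥(insert 0 Y), a.1 ∉ Y → F a = p.top := fun a h => dif_neg h
  have hFinj : Function.Injective F := by
    intro a b hab
    by_cases ha : a.1 ∈ Y <;> by_cases hb : b.1 ∈ Y
    · rw [hFY a ha, hFY b hb] at hab
      have h2 := congrArg Subtype.val (hinj ⟨a.1, ha⟩ ⟨b.1, hb⟩ hab)
      exact Subtype.ext h2
    · rw [hFY a ha, hFtop b hb] at hab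
      exact absurd (hab ▸ hlt ⟨a.1, ha⟩) (hiX p.top.1 p.top.2)
    · rw [hFtop a ha, hFY b hb] at hab
      exact absurd (hab.symm ▸ hlt ⟨b.1, hb⟩) (hiX p.top.1 p.top.2)
    · have ha0 : a.1 = 0 := by rcases a.2 with h | h; exact h; exact absurd h ha
      have hb0 : b.1 = 0 := by rcases b.2 with h | h; exact h; exact absurd h hb
      exact Subtype.ext (ha0.trans hb0.symm)
  have hmri : ∀ a b : ↥(insert 0 Y), Subrel rX X (F a) (F b) ↔
      Subrel (succRel Y rY) (insert 0 Y : Set ℕ) a b := by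
    intro a b
    by_cases ha : a.1 ∈ Y <;> by_cases hb : b.1 ∈ Y
    · rw [hFY a ha, hFY b hb]
      constructor
      · intro h
        exact Or.inl ⟨ha, hb, (pmr ⟨a.1, ha⟩ ⟨b.1, hb⟩).1 h⟩
      · rintro (⟨_, _, h⟩ | ⟨_, h0⟩)
        · exact (pmr ⟨a.1, ha⟩ ⟨b.1, hb⟩).2 h
        · exact absurd (h0 ▸ hb : (0 : ℕ) ∈ Y) hY0
    · have hb0 : b.1 = 0 := by rcases b.2 with h | h; exact h; exact absurd h hb
      rw [hFY a ha, hFtop b hb]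
      constructor
      · intro _; exact Or.inr ⟨ha, hb0⟩
      · intro _; exact hlt ⟨a.1, ha⟩
    · have ha0 : a.1 = 0 := by rcases a.2 with h | h; exact h; exact absurd h ha
      rw [hFtop a ha, hFY b hb]
      constructor
      · intro h
        exact absurd (htX _ p.top.2 _ (p ⟨b.1, hb⟩).2 _ p.top.2 h (hlt ⟨b.1, hb⟩))
          (hiX p.top.1 p.top.2)
      · rintro (⟨ha', _, _⟩ | ⟨ha', _⟩) <;> exact absurd (ha0 ▸ ha' : (0 : ℕ) ∈ Y) hY0
    · have ha0 : a.1 = 0 := by rcases a.2 with h | h; exact h; exact absurd h ha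
      rw [hFtop a ha, hFtop b hb]
      constructor
      · intro h; exact absurd h (hiX p.top.1 p.top.2)
      · rintro (⟨ha', _, _⟩ | ⟨ha', _⟩) <;> exact absurd (ha0 ▸ ha' : (0 : ℕ) ∈ Y) hY0
  have e : InitialSeg (Subrel (succRel Y rY) (insert 0 Y : Set ℕ)) (Subrel rX X) := by
    refine ⟨⟨⟨F, hFinj⟩, fun {a b} => hmri a b⟩, ?_⟩
    intro a b hb
    change Subrel rX X b (F a) at hb
    have hbt : Subrel rX X b p.top := by
      by_cases ha : a.1 ∈ Y
      · rw [hFY a ha] at hb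
        exact htX b.1 b.2 _ (p ⟨a.1, ha⟩).2 _ p.top.2 hb (hlt ⟨a.1, ha⟩)
      · rwa [hFtop a ha] at hb
    obtain ⟨⟨cv, cp⟩, hc⟩ := p.mem_range_of_rel_top hbt
    refine ⟨⟨cv, Set.mem_insert_of_mem _ cp⟩, ?_⟩
    show F _ = b
    rw [hFY _ (show cv ∈ Y from cp)]
    exact hc
  exact ⟨_, strongCompMap_of_initialSeg e⟩

end Aux

/-- comparability of well orderings, CWO.  For all well orders
`X`, `Y` on subsets of `ℕ∖{0}` there is exactly one `f : ℕ → ℕ` such that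
`f : X ≤_s Y` or `f : Y+1 ≤_s X`. -/
theorem cwo_existsUnique (X Y : Set ℕ) (rX rY : ℕ → ℕ → Prop)
    (hX0 : 0 ∉ X) (hY0 : 0 ∉ Y)
    (hX : IsWellOrdOn X rX) (hY : IsWellOrdOn Y rY) :
    ∃! f : ℕ → ℕ,
      StrongCompMap X rX Y rY f ∨ StrongCompMap (insert 0 Y) (succRel Y rY) X rX f := by
  haveI iX := isWellOrder_of_isWellOrdOn hX
  haveI iY := isWellOrder_of_isWellOrdOn hY
  -- impossibility of both directions simultaneously
  have himp : ∀ f₁ f₂ : ℕ → ℕ, StrongCompMap X rX Y rY f₁ →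
      StrongCompMap (insert 0 Y) (succRel Y rY) X rX f₂ → False := by
    intro f₁ f₂ h1 h2
    obtain ⟨e1, he1⟩ := exists_initialSeg_of_strongCompMap h1 hX.1.1 hX.1.2.1 hY.1.2.1
    obtain ⟨e2, he2⟩ := exists_initialSeg_of_strongCompMap h2
      (succRel_trans hY0 hY.1) (succRel_irrefl hY0 hY.1) hX.1.2.1
    obtain ⟨j, hj⟩ := exists_initialSeg_insert (rY := rY) hY0
    set c := (j.trans e2).trans e1 with hc
    have hcy : ∀ y : Y, c y = y := by
      intro y
      rw [Subsingleton.elim c (InitialSeg.refl _)]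
      rfl
    set t : ↥Y := e1 (e2 ⟨0, Set.mem_insert _ _⟩) with hti
    have ht : ∀ y : Y, rY y.1 t.1 := by
      intro y
      have h0 : Subrel (succRel Y rY) (insert 0 Y : Set ℕ) (j y) ⟨0, Set.mem_insert _ _⟩ :=
        Or.inr ⟨by rw [hj y]; exact y.2, rfl⟩
      have := e1.map_rel_iff.2 (e2.map_rel_iff.2 h0)
      have hcy' : e1 (e2 (j y)) = y := by
        have := hcy y
        rwa [hc, InitialSeg.trans_apply, InitialSeg.trans_apply] at this
      rw [hcy'] at this
      exact this
    exact hY.1.2.1 t.1 t.2 (ht t)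
  -- existence
  have hex : ∃ f, StrongCompMap X rX Y rY f ∨
      StrongCompMap (insert 0 Y) (succRel Y rY) X rX f := by
    rcases InitialSeg.total (Subrel rX X) (Subrel rY Y) with e | e
    · exact ⟨_, Or.inl (strongCompMap_of_initialSeg e)⟩
    · rcases e.principalSumRelIso with p | iso
      · obtain ⟨f, hf⟩ := strongCompMap_succ_of_principalSeg hY0 hX p
        exact ⟨f, Or.inr hf⟩
      · exact ⟨_, Or.inl (strongCompMap_of_initialSeg iso.symm.toInitialSeg)⟩
  obtain ⟨f, hf⟩ := hex
  refine ⟨f, hf, ?_⟩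
  intro g hg
  rcases hf with hf | hf <;> rcases hg with hg | hg
  · -- both X ≤ Y
    obtain ⟨ef, hef⟩ := exists_initialSeg_of_strongCompMap hf hX.1.1 hX.1.2.1 hY.1.2.1
    obtain ⟨eg, heg⟩ := exists_initialSeg_of_strongCompMap hg hX.1.1 hX.1.2.1 hY.1.2.1
    funext n
    by_cases hn : n ∈ X
    · rw [← hef ⟨n, hn⟩, ← heg ⟨n, hn⟩, Subsingleton.elim ef eg]
    · rw [hf.1 n hn, hg.1 n hn]
  · exact (himp f g hf hg).elim
  · exact (himp g f hg hf).elim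
  · -- both Y+1 ≤ X
    obtain ⟨ef, hef⟩ := exists_initialSeg_of_strongCompMap hf
      (succRel_trans hY0 hY.1) (succRel_irrefl hY0 hY.1) hX.1.2.1
    obtain ⟨eg, heg⟩ := exists_initialSeg_of_strongCompMap hg
      (succRel_trans hY0 hY.1) (succRel_irrefl hY0 hY.1) hX.1.2.1
    funext n
    by_cases hn : n ∈ insert 0 Y
    · rw [← hef ⟨n, hn⟩, ← heg ⟨n, hn⟩, Subsingleton.elim ef eg]
    · rw [hf.1 n hn, hg.1 n hn]
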